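/- Let (M, j, ⊗) be a monoidal category, C a category, and M[C] the free left M-actegory on C: the category M × C with action m' ⊙ (m,c) := (m' ⊗ m, c), unitor (λ_m⁻¹, 𝟙_c) and multiplicator (α⁻¹_{m'',m',m}, 𝟙_c). For any left M-actegory (D, ∘, η, μ): the functor which sends a strong M-linear functor (F, ℓ) : M[C] → (D,∘) to the functor c ↦ F(j, c), and sends an M-linear transformation to its restriction along c ↦ (j,c), is an equivalence of categories from the category of strong M-linear functors M[C] → (D,∘) and M-linear transformations to the functor category C ⥤ D. A quasi-inverse sends G : C ⥤ D to the functor (m,c) ↦ m ∘ G c, equipped with the lineator μ_{m',m,Gc} : m' ∘ (m ∘ G c) ⟶ (m' ⊗ m) ∘ G c. -/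

import Mathlib

open CategoryTheory Category MonoidalCategory

universe v₁ v₂ v₃ u₁ u₂ u₃

variable (M : Type u₁) [Category.{v₁} M] [MonoidalCategory M]
variable (C : Type u₂) [Category.{v₂} C]

/-- The data of a left actegory. -/
structure LeftActegoryData where
  actObj : M → C → C
  actHom : ∀ {m n : M} {c d : C}, (m ⟶ n) → (c ⟶ d) → (actObj m c ⟶ actObj n d)
  η : ∀ c : C, c ⟶ actObj (𝟙_ M) c
  η' : ∀ c : C, actObj (𝟙_ M) c ⟶ c
  μ : ∀ (m n : M) (c : C), actObj m (actObj n c) ⟶ actObj (m ⊗ n) c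
  μ' : ∀ (m n : M) (c : C), actObj (m ⊗ n) c ⟶ actObj m (actObj n c)

variable {M C}

/-- The laws of a left actegory. -/
structure IsLeftActegory (A : LeftActegoryData M C) : Prop where
  actHom_id : ∀ (m : M) (c : C), A.actHom (𝟙 m) (𝟙 c) = 𝟙 (A.actObj m c)
  actHom_comp : ∀ {m n p : M} {c d e : C} (g : m ⟶ n) (g' : n ⟶ p) (f : c ⟶ d) (f' : d ⟶ e),
      A.actHom (g ≫ g') (f ≫ f') = A.actHom g f ≫ A.actHom g' f'
  η_iso : ∀ c, A.η c ≫ A.η' c = 𝟙 c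
  η'_iso : ∀ c, A.η' c ≫ A.η c = 𝟙 _
  μ_iso : ∀ m n c, A.μ m n c ≫ A.μ' m n c = 𝟙 _
  μ'_iso : ∀ m n c, A.μ' m n c ≫ A.μ m n c = 𝟙 _
  η_nat : ∀ {c d : C} (f : c ⟶ d), f ≫ A.η d = A.η c ≫ A.actHom (𝟙 (𝟙_ M)) f
  μ_nat : ∀ {m m' n n' : M} {c c' : C} (g : m ⟶ m') (h : n ⟶ n') (f : c ⟶ c'),
      A.actHom g (A.actHom h f) ≫ A.μ m' n' c' = A.μ m n c ≫ A.actHom (g ⊗ₘ h) f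
  pentagon : ∀ (m n p : M) (c : C),
      A.μ m n (A.actObj p c) ≫ A.μ (m ⊗ n) p c ≫ A.actHom (α_ m n p).hom (𝟙 c)
        = A.actHom (𝟙 m) (A.μ n p c) ≫ A.μ m (n ⊗ p) c
  triangle_left : ∀ (m : M) (c : C),
      A.η (A.actObj m c) ≫ A.μ (𝟙_ M) m c = A.actHom (λ_ m).inv (𝟙 c)
  triangle_right : ∀ (m : M) (c : C),
      A.actHom (𝟙 m) (A.η c) ≫ A.μ m (𝟙_ M) c = A.actHom (ρ_ m).inv (𝟙 c)


variable (M) in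
/-- The data of a lax linear functor: a functor together with a lineator. -/
structure LaxLinearData {D : Type u₃} [Category.{v₃} D]
    (A : LeftActegoryData M C) (B : LeftActegoryData M D) where
  F : C ⥤ D
  lin : ∀ (m : M) (c : C), B.actObj m (F.obj c) ⟶ F.obj (A.actObj m c)

/-- The laws of a lax linear functor. -/
structure IsLaxLinear {D : Type u₃} [Category.{v₃} D]
    {A : LeftActegoryData M C} {B : LeftActegoryData M D}
    (L : LaxLinearData M A B) : Prop where
  lin_nat : ∀ {m n : M} {c d : C} (g : m ⟶ n) (f : c ⟶ d),
      B.actHom g (L.F.map f) ≫ L.lin n d = L.lin m c ≫ L.F.map (A.actHom g f)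
  lin_unit : ∀ c : C, B.η (L.F.obj c) ≫ L.lin (𝟙_ M) c = L.F.map (A.η c)
  lin_mult : ∀ (m n : M) (c : C),
      B.μ m n (L.F.obj c) ≫ L.lin (m ⊗ n) c
        = B.actHom (𝟙 m) (L.lin n c) ≫ L.lin m (A.actObj n c) ≫ L.F.map (A.μ m n c)

variable (M C) in
/-- The free left `M`-actegory on a category `C`: the category `M × C` with action
`m' ⊙ (m, c) := (m' ⊗ m, c)`, unitor `(λ⁻¹, 𝟙)` and multiplicator `(α⁻¹, 𝟙)`. -/
def freeActegory : LeftActegoryData M (M × C) where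
  actObj m x := (m ⊗ x.1, x.2)
  actHom g f := (g ⊗ₘ f.1, f.2)
  η x := ((λ_ x.1).inv, 𝟙 x.2)
  η' x := ((λ_ x.1).hom, 𝟙 x.2)
  μ m n x := ((α_ m n x.1).inv, 𝟙 x.2)
  μ' m n x := ((α_ m n x.1).hom, 𝟙 x.2)

variable {D : Type u₃} [Category.{v₃} D]

variable (M C) in
/-- An object of the category of strong `M`-linear functors from the free
`M`-actegory `M[C]` to a left `M`-actegory `(D, ∘)`. -/
structure FreeStrongLinear (B : LeftActegoryData M D) (hB : IsLeftActegory B) where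
  L : LaxLinearData M (freeActegory M C) B
  laxLinear : IsLaxLinear L
  strong : ∀ (m : M) (x : M × C), IsIso (L.lin m x)

variable {B : LeftActegoryData M D} {hB : IsLeftActegory B}

/-- An `M`-linear transformation between strong `M`-linear functors out of the
free actegory. -/
@[ext]
structure LinearHom (K K' : FreeStrongLinear M C B hB) where
  t : K.L.F ⟶ K'.L.F
  linearity : ∀ (m : M) (x : M × C),
      B.actHom (𝟙 m) (t.app x) ≫ K'.L.lin m x
        = K.L.lin m x ≫ t.app ((freeActegory M C).actObj m x)

/-- The category of strong `M`-linear functors `M[C] → (D, ∘)` and `M`-linear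
transformations. -/
instance : Category (FreeStrongLinear M C B hB) where
  Hom := LinearHom
  id K :=
    { t := 𝟙 K.L.F
      linearity := fun m x => by
        simp [hB.actHom_id] }
  comp {K₁ K₂ K₃} f g :=
    { t := f.t ≫ g.t
      linearity := fun m x => by
        have h : B.actHom (𝟙 m) (f.t.app x ≫ g.t.app x)
            = B.actHom (𝟙 m) (f.t.app x) ≫ B.actHom (𝟙 m) (g.t.app x) := by
          rw [← hB.actHom_comp]; simp
        simp only [NatTrans.comp_app, h, Category.assoc, g.linearity]
        rw [← Category.assoc, f.linearity, Category.assoc] }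
  id_comp f := by
    apply LinearHom.ext
    show 𝟙 _ ≫ f.t = f.t
    simp
  comp_id f := by
    apply LinearHom.ext
    show f.t ≫ 𝟙 _ = f.t
    simp
  assoc f g h := by
    apply LinearHom.ext
    show (f.t ≫ g.t) ≫ h.t = f.t ≫ g.t ≫ h.t
    simp

variable (M C) in
/-- The restriction functor sending a strong linear functor `(F, ℓ) : M[C] → (D, ∘)`
to the functor `c ↦ F (j, c)` and a linear transformation to its restriction. -/
def restrictFree (B : LeftActegoryData M D) (hB : IsLeftActegory B) :
    FreeStrongLinear M C B hB ⥤ (C ⥤ D) where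
  obj K :=
    { obj := fun c => K.L.F.obj (𝟙_ M, c)
      map := fun f => K.L.F.map (𝟙 (𝟙_ M), f)
      map_id := fun c => K.L.F.map_id (𝟙_ M, c)
      map_comp := fun f g => by
        rw [← K.L.F.map_comp]
        congr 1
        ext <;> simp }
  map ξ :=
    { app := fun c => ξ.t.app (𝟙_ M, c)
      naturality := fun c d f => by
        exact ξ.t.naturality ((𝟙 (𝟙_ M), f) : ((𝟙_ M, c) : M × C) ⟶ (𝟙_ M, d)) }
  map_id K := by
    apply NatTrans.ext
    funext c
    rfl
  map_comp f g := by
    apply NatTrans.ext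
    funext c
    rfl

variable (M C) in
/-- The lift of a functor `G : C ⥤ D` to the strong linear functor
`(m, c) ↦ m ∘ G c` out of the free actegory, with lineator the multiplicator. -/
def liftFree (B : LeftActegoryData M D) (hB : IsLeftActegory B) (G : C ⥤ D) :
    FreeStrongLinear M C B hB where
  L :=
    { F :=
        { obj := fun x => B.actObj x.1 (G.obj x.2)
          map := fun f => B.actHom f.1 (G.map f.2)
          map_id := fun x => by simp [hB.actHom_id]
          map_comp := fun f g => by
            dsimp
            rw [G.map_comp, hB.actHom_comp] }
      lin := fun m x => B.μ m x.1 (G.obj x.2) }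
  laxLinear :=
    { lin_nat := fun g f => by
        dsimp
        exact hB.μ_nat g f.1 (G.map f.2)
      lin_unit := fun x => by
        dsimp [freeActegory]
        rw [G.map_id]
        exact hB.triangle_left x.1 (G.obj x.2)
      lin_mult := fun m n x => by
        dsimp [freeActegory]
        rw [G.map_id]
        have hinv : B.actHom (α_ m n x.1).hom (𝟙 (G.obj x.2))
            ≫ B.actHom (α_ m n x.1).inv (𝟙 (G.obj x.2)) = 𝟙 _ := by
          rw [← hB.actHom_comp]; simp [hB.actHom_id]
        have hp := hB.pentagon m n x.1 (G.obj x.2)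
        calc B.μ m n (B.actObj x.1 (G.obj x.2)) ≫ B.μ (m ⊗ n) x.1 (G.obj x.2)
            = (B.μ m n (B.actObj x.1 (G.obj x.2)) ≫ B.μ (m ⊗ n) x.1 (G.obj x.2)
                ≫ B.actHom (α_ m n x.1).hom (𝟙 (G.obj x.2)))
                ≫ B.actHom (α_ m n x.1).inv (𝟙 (G.obj x.2)) := by
              simp only [Category.assoc, hinv, Category.comp_id]
          _ = (B.actHom (𝟙 m) (B.μ n x.1 (G.obj x.2)) ≫ B.μ m (n ⊗ x.1) (G.obj x.2))
                ≫ B.actHom (α_ m n x.1).inv (𝟙 (G.obj x.2)) := by rw [hp]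
          _ = B.actHom (𝟙 m) (B.μ n x.1 (G.obj x.2)) ≫ B.μ m (n ⊗ x.1) (G.obj x.2)
                ≫ B.actHom (α_ m n x.1).inv (𝟙 (G.obj x.2)) := by
              simp only [Category.assoc] }
  strong := fun m x =>
    ⟨B.μ' m x.1 (G.obj x.2), hB.μ_iso _ _ _, hB.μ'_iso _ _ _⟩


section Aux

/-- `actHom` on identities in the first slot composes like morphisms in `C`. -/
lemma actHom_id_comp (hB : IsLeftActegory B) (m : M) {c d e : D}
    (f : c ⟶ d) (g : d ⟶ e) :
    B.actHom (𝟙 m) f ≫ B.actHom (𝟙 m) g = B.actHom (𝟙 m) (f ≫ g) := by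
  rw [← hB.actHom_comp]; simp

/-- A linear morphism whose underlying components are isomorphisms is an
isomorphism in the category of strong linear functors. -/
lemma LinearHom.isIso_of_components {K K' : FreeStrongLinear M C B hB}
    (hB' : IsLeftActegory B) (f : K ⟶ K') (h : ∀ x, IsIso (f.t.app x)) :
    IsIso f := by
  haveI : IsIso f.t := NatIso.isIso_of_isIso_app f.t
  refine ⟨⟨{ t := inv f.t
             linearity := fun m x => by
               have hl := f.linearity m x
               have happ : (inv f.t).app x = inv (f.t.app x) := by simp
               have happ' : (inv f.t).app ((freeActegory M C).actObj m x)
                   = inv (f.t.app ((freeActegory M C).actObj m x)) := by simp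
               rw [happ, happ']
               haveI := h x
               haveI := h ((freeActegory M C).actObj m x)
               rw [← cancel_mono (f.t.app ((freeActegory M C).actObj m x))]
               simp only [Category.assoc, IsIso.inv_hom_id, Category.comp_id]
               rw [← hl, ← Category.assoc, actHom_id_comp hB', IsIso.inv_hom_id]
               simp [hB'.actHom_id] }, ?_, ?_⟩⟩
  · apply LinearHom.ext
    show f.t ≫ inv f.t = 𝟙 _
    simp
  · apply LinearHom.ext
    show inv f.t ≫ f.t = 𝟙 _
    simp

variable (M C) in
/-- The lifting functor `(C ⥤ D) ⥤ FreeStrongLinear M C B hB`. -/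
def liftFreeFunctor (B : LeftActegoryData M D) (hB : IsLeftActegory B) :
    (C ⥤ D) ⥤ FreeStrongLinear M C B hB where
  obj G := liftFree M C B hB G
  map {G G'} ξ :=
    { t :=
        { app := fun x => B.actHom (𝟙 x.1) (ξ.app x.2)
          naturality := fun x y f => by
            dsimp [liftFree]
            rw [← hB.actHom_comp, ← hB.actHom_comp]
            simp [ξ.naturality] }
      linearity := fun m x => by
        have := hB.μ_nat (𝟙 m) (𝟙 x.1) (ξ.app x.2)
        dsimp [liftFree, freeActegory] at this ⊢
        rw [this, MonoidalCategory.id_tensorHom_id] }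
  map_id G := by
    apply LinearHom.ext
    apply NatTrans.ext
    funext x
    exact hB.actHom_id x.1 (G.obj x.2)
  map_comp {G G' G''} ξ ζ := by
    apply LinearHom.ext
    apply NatTrans.ext
    funext x
    exact (actHom_id_comp hB x.1 (ξ.app x.2) (ζ.app x.2)).symm

/-- Conjugate naturality for the inverse unitor `η'`. -/
lemma eta'_nat (hB : IsLeftActegory B) {c d : D} (f : c ⟶ d) :
    B.actHom (𝟙 (𝟙_ M)) f ≫ B.η' d = B.η' c ≫ f := by
  calc B.actHom (𝟙 (𝟙_ M)) f ≫ B.η' d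
      = (B.η' c ≫ B.η c) ≫ B.actHom (𝟙 (𝟙_ M)) f ≫ B.η' d := by
        rw [hB.η'_iso, Category.id_comp]
    _ = B.η' c ≫ (B.η c ≫ B.actHom (𝟙 (𝟙_ M)) f) ≫ B.η' d := by
        simp only [Category.assoc]
    _ = B.η' c ≫ (f ≫ B.η d) ≫ B.η' d := by rw [← hB.η_nat]
    _ = B.η' c ≫ f := by simp only [Category.assoc, hB.η_iso, Category.comp_id]

/-- The right unitor inverse as a morphism in the product category. -/
def rhoPair (x : M × C) : x ⟶ ((x.1 ⊗ 𝟙_ M, x.2) : M × C) :=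
  ((ρ_ x.1).inv, 𝟙 x.2)

/-- The right unitor inverse is an isomorphism in the product category. -/
lemma rhoPair_isIso (x : M × C) : IsIso (rhoPair x) := by
  exact ⟨((ρ_ x.1).hom, 𝟙 x.2), Prod.ext (by simp [rhoPair]) (by simp [rhoPair]),
    Prod.ext (by simp [rhoPair]) (by simp [rhoPair])⟩

/-- The component of the unit of the equivalence. -/
noncomputable def unitHom (K : FreeStrongLinear M C B hB) :
    K ⟶ (restrictFree M C B hB ⋙ liftFreeFunctor M C B hB).obj K where
  t :=
    { app := fun x =>
        haveI : @IsIso _ _ (B.actObj x.1 (K.L.F.obj (𝟙_ M, x.2)))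
            (K.L.F.obj (x.1 ⊗ 𝟙_ M, x.2)) (K.L.lin x.1 (𝟙_ M, x.2)) := K.strong x.1 (𝟙_ M, x.2)
        K.L.F.map (((ρ_ x.1).inv, 𝟙 x.2) : x ⟶ (x.1 ⊗ 𝟙_ M, x.2))
          ≫ (inv (K.L.lin x.1 (𝟙_ M, x.2)) : K.L.F.obj (x.1 ⊗ 𝟙_ M, x.2)
              ⟶ B.actObj x.1 (K.L.F.obj (𝟙_ M, x.2)))
      naturality := fun x y f => by
        haveI := K.strong x.1 (𝟙_ M, x.2)
        haveI := K.strong y.1 (𝟙_ M, y.2)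
        dsimp [restrictFree, liftFreeFunctor, liftFree]
        have hn := K.laxLinear.lin_nat f.1
          ((𝟙 (𝟙_ M), f.2) : ((𝟙_ M, x.2) : M × C) ⟶ (𝟙_ M, y.2))
        dsimp [freeActegory] at hn
        rw [← cancel_mono (K.L.lin y.1 (𝟙_ M, y.2))]
        simp only [Category.assoc, IsIso.inv_hom_id, Category.comp_id]
        erw [IsIso.inv_hom_id, Category.comp_id]
        erw [hn, IsIso.inv_hom_id_assoc, ← K.L.F.map_comp, ← K.L.F.map_comp]
        congr 1
        refine Prod.ext ?_ (by simp)
        show f.1 ≫ (ρ_ y.1).inv = (ρ_ x.1).inv ≫ (f.1 ⊗ₘ 𝟙 (𝟙_ M))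
        simp [MonoidalCategory.tensorHom_id] }
  linearity := fun m x => by
    haveI := K.strong x.1 (𝟙_ M, x.2)
    haveI := K.strong (m ⊗ x.1) (𝟙_ M, x.2)
    dsimp [restrictFree, liftFreeFunctor, liftFree, freeActegory]
    rw [← cancel_mono (K.L.lin (m ⊗ x.1) (𝟙_ M, x.2))]
    have hm := K.laxLinear.lin_mult m x.1 (𝟙_ M, x.2)
    dsimp [freeActegory] at hm
    have hn := K.laxLinear.lin_nat (𝟙 m)
      (((ρ_ x.1).inv, 𝟙 x.2) : ((x.1, x.2) : M × C) ⟶ (x.1 ⊗ 𝟙_ M, x.2))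
    dsimp [freeActegory] at hn
    simp only [Category.assoc, IsIso.inv_hom_id, Category.comp_id]
    erw [hm, ← actHom_id_comp hB]
    erw [IsIso.inv_hom_id, Category.comp_id]
    erw [Category.assoc (B.actHom (𝟙 m) _)]
    erw [← Category.assoc _ (B.actHom (𝟙 m) (K.L.lin _ _))]
    erw [actHom_id_comp hB, IsIso.inv_hom_id, hB.actHom_id, Category.id_comp]
    erw [← Category.assoc, hn, Category.assoc, ← K.L.F.map_comp]
    refine congrArg₂ (· ≫ ·) rfl ?_
    refine congrArg K.L.F.map ?_
    refine Prod.ext ?_ ?_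
    · show (𝟙 m ⊗ₘ (ρ_ x.1).inv) ≫ (α_ m x.1 (𝟙_ M)).inv = (ρ_ (m ⊗ x.1)).inv
      monoidal_coherence
    · show 𝟙 x.2 ≫ 𝟙 x.2 = 𝟙 x.2
      simp

/-- Naturality of the unit. -/
lemma unitHom_naturality {K K' : FreeStrongLinear M C B hB} (ξ : K ⟶ K') :
    ξ ≫ unitHom K' = unitHom K
      ≫ (restrictFree M C B hB ⋙ liftFreeFunctor M C B hB).map ξ := by
  apply LinearHom.ext
  apply NatTrans.ext
  funext x
  haveI := K.strong x.1 (𝟙_ M, x.2)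
  haveI := K'.strong x.1 (𝟙_ M, x.2)
  show ξ.t.app x ≫ (unitHom K').t.app x
      = (unitHom K).t.app x ≫ B.actHom (𝟙 x.1) (ξ.t.app (𝟙_ M, x.2))
  dsimp [unitHom]
  have hn := ξ.t.naturality (((ρ_ x.1).inv, 𝟙 x.2) : x ⟶ (x.1 ⊗ 𝟙_ M, x.2))
  have hl := ξ.linearity x.1 (𝟙_ M, x.2)
  dsimp [freeActegory] at hl
  erw [← cancel_mono (K'.L.lin x.1 (𝟙_ M, x.2))]
  erw [Category.assoc, Category.assoc, IsIso.inv_hom_id, Category.comp_id]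
  erw [Category.assoc, Category.assoc, hl, IsIso.inv_hom_id_assoc]
  exact hn.symm

/-- The component of the counit of the equivalence. -/
def counitIsoApp (G : C ⥤ D) :
    (liftFreeFunctor M C B hB ⋙ restrictFree M C B hB).obj G ≅ G :=
  NatIso.ofComponents
    (fun c => ⟨B.η' (G.obj c), B.η (G.obj c), hB.η'_iso _, hB.η_iso _⟩)
    (fun {c d} f => by
      dsimp [restrictFree, liftFreeFunctor, liftFree]
      exact eta'_nat hB (G.map f))

/-- The unit components are isomorphisms. -/
lemma unitHom_isIso (K : FreeStrongLinear M C B hB) : IsIso (unitHom K) := by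
  refine LinearHom.isIso_of_components hB _ (fun x => ?_)
  haveI hlin : @IsIso _ _ (B.actObj x.1 (K.L.F.obj (𝟙_ M, x.2)))
      (K.L.F.obj (x.1 ⊗ 𝟙_ M, x.2)) (K.L.lin x.1 (𝟙_ M, x.2)) := K.strong x.1 (𝟙_ M, x.2)
  haveI := rhoPair_isIso (C := C) x
  show IsIso (K.L.F.map (rhoPair x) ≫ (inv (K.L.lin x.1 (𝟙_ M, x.2)) : K.L.F.obj (x.1 ⊗ 𝟙_ M, x.2)
      ⟶ B.actObj x.1 (K.L.F.obj (𝟙_ M, x.2))))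
  exact IsIso.comp_isIso' inferInstance (@IsIso.inv_isIso _ _ _ _ _ hlin)

end Aux

/-- For any left `M`-actegory `(D, ∘, η, μ)`, the restriction functor
sending a strong `M`-linear functor `(F, ℓ) : M[C] → (D, ∘)` to `c ↦ F (j, c)` (and a
linear transformation to its restriction) is an equivalence from the category of
strong `M`-linear functors out of the free actegory `M[C]` (with `M`-linear
transformations) to the functor category `C ⥤ D`; a quasi-inverse sends `G : C ⥤ D`
to `(m, c) ↦ m ∘ G c` with lineator the multiplicator `μ`. -/
theorem restrictFree_isEquivalence
    (B : LeftActegoryData M D) (hB : IsLeftActegory B) :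
    (restrictFree M C B hB).IsEquivalence ∧
    ∃ E : FreeStrongLinear M C B hB ≌ (C ⥤ D),
      E.functor = restrictFree M C B hB ∧
      ∀ G : C ⥤ D, E.inverse.obj G = liftFree M C B hB G := by
  classical
  have unitIso : 𝟭 (FreeStrongLinear M C B hB)
      ≅ restrictFree M C B hB ⋙ liftFreeFunctor M C B hB := by
    exact NatIso.ofComponents
      (fun K => @asIso _ _ _ _ (unitHom K) (unitHom_isIso K))
      (fun {K K'} ξ => unitHom_naturality ξ)
  have counitIso : liftFreeFunctor M C B hB ⋙ restrictFree M C B hB ≅ 𝟭 (C ⥤ D) := by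
    refine NatIso.ofComponents (fun G => counitIsoApp G) (fun {G G'} ξ => ?_)
    apply NatTrans.ext
    funext c
    show B.actHom (𝟙 (𝟙_ M)) (ξ.app c) ≫ B.η' (G'.obj c)
        = B.η' (G.obj c) ≫ ξ.app c
    exact eta'_nat hB (ξ.app c)
  let E : FreeStrongLinear M C B hB ≌ (C ⥤ D) :=
    CategoryTheory.Equivalence.mk (restrictFree M C B hB)
      (liftFreeFunctor M C B hB) unitIso counitIso
  exact ⟨E.isEquivalence_functor, E, rfl, fun G => rfl⟩
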